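/- If w is a permutation with d_i(w) = x ≠ w and σ(w)_{i-2} = -σ(x)_{i-2}, then σ(w)_{i-2} = -σ(w)_{i-1}. Symmetrically, if σ(w)_{i+1} = -σ(x)_{i+1}, then σ(w)_{i+1} = -σ(w)_i. -/
import Mathlib


/-!  Permutations of `{1,…,n}` are modelled as `Equiv.Perm (Fin n)` with 0-based
values: the value `v : Fin n` stands for the paper's value `v+1`, and
`w.symm v` is the position of the value `v` in one-line notation.
`dmove n i` is the paper's elementary dual equivalence involution `d_{i+1}`
(so `i` ranges over `1 ≤ i` and `i + 1 < n`, matching the paper's `1 < i+1 < n`),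
and `dtmove n i` is the twisted move `d̃_{i+1}`. -/

/-- Haiman's elementary dual equivalence move: if the position of the middle
value `i` lies between the positions of `i-1` and `i+1`, do nothing; otherwise
interchange the value `i` with whichever of `i-1, i+1` is positioned further
from it. -/
def dmove (n : ℕ) (i : ℕ) (w : Equiv.Perm (Fin n)) : Equiv.Perm (Fin n) :=
  if h : 1 ≤ i ∧ i + 1 < n then
    let a : Fin n := ⟨i - 1, by omega⟩
    let b : Fin n := ⟨i, by omega⟩
    let c : Fin n := ⟨i + 1, by omega⟩
    let pa := w.symm a
    let pb := w.symm b
    let pc := w.symm c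
    if (pa < pb ∧ pb < pc) ∨ (pc < pb ∧ pb < pa) then w
    else if pb < pa ∧ pb < pc then
      (if pa < pc then Equiv.swap c b else Equiv.swap a b) * w
    else
      (if pa < pc then Equiv.swap a b else Equiv.swap c b) * w
  else w

/-- The twisted elementary dual equivalence move: if the position of the middle
value `i` lies between those of `i-1` and `i+1`, do nothing; otherwise
cyclically rotate the three values `i-1, i, i+1` so that `i` moves to the
other side of `i-1` and `i+1`, the outer two keeping their relative order. -/
def dtmove (n : ℕ) (i : ℕ) (w : Equiv.Perm (Fin n)) : Equiv.Perm (Fin n) :=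
  if h : 1 ≤ i ∧ i + 1 < n then
    let a : Fin n := ⟨i - 1, by omega⟩
    let b : Fin n := ⟨i, by omega⟩
    let c : Fin n := ⟨i + 1, by omega⟩
    let pa := w.symm a
    let pb := w.symm b
    let pc := w.symm c
    let u := if pa < pc then a else c   -- the outer value occurring first
    let v := if pa < pc then c else a   -- the outer value occurring last
    if (pa < pb ∧ pb < pc) ∨ (pc < pb ∧ pb < pa) then w
    else if pb < pa ∧ pb < pc then
      (Equiv.swap b u * Equiv.swap u v) * w
    else
      (Equiv.swap u b * Equiv.swap b v) * w
  else w

/-- The inverse descent signature: `sig n w j = +1` if the (0-based) value `j`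
occurs to the left of the value `j+1` in the one-line notation of `w`, and `-1`
otherwise.  (`sig n w (j-1)` is the paper's `σ(w)_j`.) -/
def sig (n : ℕ) (w : Equiv.Perm (Fin n)) (j : ℕ) : ℤ :=
  if h : j + 1 < n then
    if w.symm ⟨j, by omega⟩ < w.symm ⟨j + 1, h⟩ then 1 else -1
  else 1


lemma sig_eq_ite {n j k : ℕ} (w : Equiv.Perm (Fin n)) (hj : j < n) (hk : k < n)
    (hjk : k = j + 1) :
    sig n w j = if w.symm ⟨j, hj⟩ < w.symm ⟨k, hk⟩ then 1 else -1 := by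
  subst hjk
  rw [sig, dif_pos hk]

lemma swap_mul_symm {n : ℕ} (u v z : Fin n) (w : Equiv.Perm (Fin n)) :
    (Equiv.swap u v * w).symm z = w.symm (Equiv.swap u v z) := rfl

lemma mk_ne_mk {n j k : ℕ} (hj : j < n) (hk : k < n) (h : j ≠ k) :
    (⟨j, hj⟩ : Fin n) ≠ ⟨k, hk⟩ :=
  fun he => h (congrArg Fin.val he)

/-- if `x = d_i(w) ≠ w` and `σ(w)_{i-2} = -σ(x)_{i-2}`, then
`σ(w)_{i-2} = -σ(w)_{i-1}`; symmetrically, if `σ(w)_{i+1} = -σ(x)_{i+1}` then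
`σ(w)_{i+1} = -σ(w)_i`.  (0-based middle value `i`, so the paper's range
`3 < i < n-1` becomes `3 ≤ i` and `i + 2 < n`.) -/
theorem dmove_axiom3 (n i : ℕ) (hi : 3 ≤ i) (hin : i + 2 < n)
    (w : Equiv.Perm (Fin n)) (hx : dmove n i w ≠ w) :
    (sig n w (i - 2) = -sig n (dmove n i w) (i - 2) →
      sig n w (i - 2) = -sig n w (i - 1)) ∧
    (sig n w (i + 1) = -sig n (dmove n i w) (i + 1) →
      sig n w (i + 1) = -sig n w i) := by
  have qA : i - 1 < n := by omega
  have qB : i < n := by omega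
  have qC : i + 1 < n := by omega
  have qD : i - 2 < n := by omega
  have qE : i + 2 < n := by omega
  have hd : dmove n i w =
      (if (w.symm ⟨i - 1, qA⟩ < w.symm ⟨i, qB⟩ ∧ w.symm ⟨i, qB⟩ < w.symm ⟨i + 1, qC⟩) ∨
          (w.symm ⟨i + 1, qC⟩ < w.symm ⟨i, qB⟩ ∧ w.symm ⟨i, qB⟩ < w.symm ⟨i - 1, qA⟩) then w
       else if w.symm ⟨i, qB⟩ < w.symm ⟨i - 1, qA⟩ ∧ w.symm ⟨i, qB⟩ < w.symm ⟨i + 1, qC⟩ then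
         (if w.symm ⟨i - 1, qA⟩ < w.symm ⟨i + 1, qC⟩ then
            Equiv.swap ⟨i + 1, qC⟩ ⟨i, qB⟩ else Equiv.swap ⟨i - 1, qA⟩ ⟨i, qB⟩) * w
       else
         (if w.symm ⟨i - 1, qA⟩ < w.symm ⟨i + 1, qC⟩ then
            Equiv.swap ⟨i - 1, qA⟩ ⟨i, qB⟩ else Equiv.swap ⟨i + 1, qC⟩ ⟨i, qB⟩) * w) := by
    rw [dmove, dif_pos (⟨by omega, by omega⟩ : 1 ≤ i ∧ i + 1 < n)]
  have nev : ∀ (j k : ℕ) (hj : j < n) (hk : k < n), j ≠ k →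
      (w.symm ⟨j, hj⟩).val ≠ (w.symm ⟨k, hk⟩).val := by
    intro j k hj hk hjk h
    exact hjk (congrArg Fin.val (w.symm.injective (Fin.ext h)))
  have nDA := nev (i - 2) (i - 1) qD qA (by omega)
  have nDB := nev (i - 2) i qD qB (by omega)
  have nAB := nev (i - 1) i qA qB (by omega)
  have nAC := nev (i - 1) (i + 1) qA qC (by omega)
  have nBC := nev i (i + 1) qB qC (by omega)
  have nEB := nev (i + 2) i qE qB (by omega)
  have nEC := nev (i + 2) (i + 1) qE qC (by omega)
  rw [hd] at hx ⊢
  split_ifs at hx ⊢ with h1 h2 h3 h3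
  · exact absurd rfl hx
  · -- x = swap c b * w ; pb < pa, pb < pc, pa < pc
    constructor
    · rw [sig_eq_ite w qD qA (by omega), sig_eq_ite w qA qB (by omega),
        sig_eq_ite _ qD qA (by omega), swap_mul_symm, swap_mul_symm,
        Equiv.swap_apply_of_ne_of_ne (mk_ne_mk qD qC (by omega)) (mk_ne_mk qD qB (by omega)),
        Equiv.swap_apply_of_ne_of_ne (mk_ne_mk qA qC (by omega)) (mk_ne_mk qA qB (by omega))]
      intro hs
      split_ifs at hs ⊢ <;> simp only [Fin.lt_def] at * <;> omega
    · rw [sig_eq_ite w qC qE (by omega), sig_eq_ite w qB qC (by omega),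
        sig_eq_ite _ qC qE (by omega), swap_mul_symm, swap_mul_symm,
        Equiv.swap_apply_left,
        Equiv.swap_apply_of_ne_of_ne (mk_ne_mk qE qC (by omega)) (mk_ne_mk qE qB (by omega))]
      intro hs
      split_ifs at hs ⊢ <;> simp only [Fin.lt_def] at * <;> omega
  · -- x = swap a b * w ; pb < pa, pb < pc, ¬ pa < pc
    constructor
    · rw [sig_eq_ite w qD qA (by omega), sig_eq_ite w qA qB (by omega),
        sig_eq_ite _ qD qA (by omega), swap_mul_symm, swap_mul_symm,
        Equiv.swap_apply_of_ne_of_ne (mk_ne_mk qD qA (by omega)) (mk_ne_mk qD qB (by omega)),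
        Equiv.swap_apply_left]
      intro hs
      split_ifs at hs ⊢ <;> simp only [Fin.lt_def] at * <;> omega
    · rw [sig_eq_ite w qC qE (by omega), sig_eq_ite w qB qC (by omega),
        sig_eq_ite _ qC qE (by omega), swap_mul_symm, swap_mul_symm,
        Equiv.swap_apply_of_ne_of_ne (mk_ne_mk qC qA (by omega)) (mk_ne_mk qC qB (by omega)),
        Equiv.swap_apply_of_ne_of_ne (mk_ne_mk qE qA (by omega)) (mk_ne_mk qE qB (by omega))]
      intro hs
      split_ifs at hs ⊢ <;> simp only [Fin.lt_def] at * <;> omega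
  · -- x = swap a b * w ; ¬between, ¬(pb<pa∧pb<pc), pa < pc
    constructor
    · rw [sig_eq_ite w qD qA (by omega), sig_eq_ite w qA qB (by omega),
        sig_eq_ite _ qD qA (by omega), swap_mul_symm, swap_mul_symm,
        Equiv.swap_apply_of_ne_of_ne (mk_ne_mk qD qA (by omega)) (mk_ne_mk qD qB (by omega)),
        Equiv.swap_apply_left]
      intro hs
      split_ifs at hs ⊢ <;> simp only [Fin.lt_def] at * <;> omega
    · rw [sig_eq_ite w qC qE (by omega), sig_eq_ite w qB qC (by omega),
        sig_eq_ite _ qC qE (by omega), swap_mul_symm, swap_mul_symm,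
        Equiv.swap_apply_of_ne_of_ne (mk_ne_mk qC qA (by omega)) (mk_ne_mk qC qB (by omega)),
        Equiv.swap_apply_of_ne_of_ne (mk_ne_mk qE qA (by omega)) (mk_ne_mk qE qB (by omega))]
      intro hs
      split_ifs at hs ⊢ <;> simp only [Fin.lt_def] at * <;> omega
  · -- x = swap c b * w ; ¬between, ¬(pb<pa∧pb<pc), ¬ pa < pc
    constructor
    · rw [sig_eq_ite w qD qA (by omega), sig_eq_ite w qA qB (by omega),
        sig_eq_ite _ qD qA (by omega), swap_mul_symm, swap_mul_symm,
        Equiv.swap_apply_of_ne_of_ne (mk_ne_mk qD qC (by omega)) (mk_ne_mk qD qB (by omega)),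
        Equiv.swap_apply_of_ne_of_ne (mk_ne_mk qA qC (by omega)) (mk_ne_mk qA qB (by omega))]
      intro hs
      split_ifs at hs ⊢ <;> simp only [Fin.lt_def] at * <;> omega
    · rw [sig_eq_ite w qC qE (by omega), sig_eq_ite w qB qC (by omega),
        sig_eq_ite _ qC qE (by omega), swap_mul_symm, swap_mul_symm,
        Equiv.swap_apply_left,
        Equiv.swap_apply_of_ne_of_ne (mk_ne_mk qE qC (by omega)) (mk_ne_mk qE qB (by omega))]
      intro hs
      split_ifs at hs ⊢ <;> simp only [Fin.lt_def] at * <;> omega
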